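/- Let k > 0 and consider the function Φ(N,R_c) = 1/12 + R_c/(4(1−N²)) − (1/4)·√(N²R_c/(1−N²))·coth(N·√((1−N²)/R_c)) for 0 < N < 1 and R_c > 0. Then Φ(N,R_c) > 0. -/

import Mathlib

noncomputable def Rcoth (x : ℝ) : ℝ := Real.cosh x / Real.sinh x

lemma sinh_lt_mul_cosh {x : ℝ} (hx : 0 < x) : Real.sinh x < x * Real.cosh x := by
  have h : StrictMonoOn (fun y : ℝ => y * Real.cosh y - Real.sinh y) (Set.Ici 0) := by
    apply strictMonoOn_of_deriv_pos (convex_Ici 0)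
    · fun_prop
    · intro y hy
      rw [interior_Ici] at hy
      have hd : HasDerivAt (fun y : ℝ => y * Real.cosh y - Real.sinh y)
          (1 * Real.cosh y + y * Real.sinh y - Real.cosh y) y :=
        ((hasDerivAt_id y).mul (Real.hasDerivAt_cosh y)).sub (Real.hasDerivAt_sinh y)
      rw [hd.deriv]
      have hy' : (0:ℝ) < y := hy
      have := Real.sinh_pos_iff.2 hy'
      nlinarith
  have := h (Set.self_mem_Ici) (Set.mem_Ici.2 hx.le) hx
  simpa using this

lemma mul_cosh_lt {x : ℝ} (hx : 0 < x) :
    x * Real.cosh x < Real.sinh x + x ^ 2 * Real.sinh x / 3 := by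
  have h : StrictMonoOn
      (fun y : ℝ => Real.sinh y + y ^ 2 * Real.sinh y / 3 - y * Real.cosh y) (Set.Ici 0) := by
    apply strictMonoOn_of_deriv_pos (convex_Ici 0)
    · fun_prop
    · intro y hy
      rw [interior_Ici] at hy
      have hd : HasDerivAt
          (fun y : ℝ => Real.sinh y + y ^ 2 * Real.sinh y / 3 - y * Real.cosh y)
          (Real.cosh y + (2 * y ^ 1 * Real.sinh y + y ^ 2 * Real.cosh y) / 3 -
            (1 * Real.cosh y + y * Real.sinh y)) y := by
        exact ((Real.hasDerivAt_sinh y).add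
          ((((hasDerivAt_pow 2 y).mul (Real.hasDerivAt_sinh y))).div_const 3)).sub
          ((hasDerivAt_id y).mul (Real.hasDerivAt_cosh y))
      rw [hd.deriv]
      have hy' : (0:ℝ) < y := hy
      have h1 := sinh_lt_mul_cosh hy'
      have h2 := Real.cosh_pos (x := y)
      nlinarith [mul_lt_mul_of_pos_left h1 hy', pow_one y]
  have := h (Set.self_mem_Ici) (Set.mem_Ici.2 hx.le) hx
  simpa using this

lemma Rcoth_lt {x : ℝ} (hx : 0 < x) : Rcoth x < 1 / x + x / 3 := by
  have hs : 0 < Real.sinh x := Real.sinh_pos_iff.2 hx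
  rw [Rcoth, div_lt_iff₀ hs,
    show (1 / x + x / 3) = (3 + x ^ 2) / (3 * x) by field_simp,
    div_mul_eq_mul_div, lt_div_iff₀ (by positivity)]
  nlinarith [mul_cosh_lt hx]

/-- Positivity of the flow factor
`Φ(N,R_c) = 1/12 + R_c/(4(1−N²)) − (1/4)√(N²R_c/(1−N²)) coth(N√((1−N²)/R_c))`
for `0 < N < 1`, `R_c > 0`. -/
theorem flow_factor_Phi_pos (N Rc : ℝ) (hN0 : 0 < N) (hN1 : N < 1) (hRc : 0 < Rc) :
    0 < 1 / 12 + Rc / (4 * (1 - N ^ 2)) -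
      (1 / 4) * Real.sqrt (N ^ 2 * Rc / (1 - N ^ 2)) *
        Rcoth (N * Real.sqrt ((1 - N ^ 2) / Rc)) := by
  have hs : 0 < 1 - N ^ 2 := by nlinarith
  set a : ℝ := Real.sqrt (Rc / (1 - N ^ 2)) with ha
  have ha0 : 0 < a := Real.sqrt_pos.2 (by positivity)
  have ha2 : a ^ 2 = Rc / (1 - N ^ 2) := Real.sq_sqrt (by positivity)
  have hb : Real.sqrt ((1 - N ^ 2) / Rc) = 1 / a := by
    rw [ha, one_div, ← Real.sqrt_inv, inv_div]
  have hc : Real.sqrt (N ^ 2 * Rc / (1 - N ^ 2)) = N * a := by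
    rw [ha, show N ^ 2 * Rc / (1 - N ^ 2) = N ^ 2 * (Rc / (1 - N ^ 2)) by ring,
      Real.sqrt_mul (by positivity), Real.sqrt_sq hN0.le]
  have hx : 0 < N * (1 / a) := by positivity
  have hco := Rcoth_lt hx
  have hRpos : 0 < Rcoth (N * (1 / a)) := by
    rw [Rcoth]
    exact div_pos (Real.cosh_pos _) (Real.sinh_pos_iff.2 hx)
  rw [hb, hc]
  have key : N * a * Rcoth (N * (1 / a)) < a ^ 2 + N ^ 2 / 3 := by
    have h1 : 1 / (N * (1 / a)) = a / N := by field_simp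
    have h2 : N * a * Rcoth (N * (1 / a)) < N * a * (1 / (N * (1 / a)) + N * (1 / a) / 3) := by
      apply mul_lt_mul_of_pos_left hco (by positivity)
    calc N * a * Rcoth (N * (1 / a)) < N * a * (a / N + N * (1 / a) / 3) := by rwa [h1] at h2
    _ = a ^ 2 + N ^ 2 / 3 := by field_simp
  rw [ha2] at key
  have heq : Rc / (4 * (1 - N ^ 2)) = (1 / 4) * (Rc / (1 - N ^ 2)) := by
    rw [mul_comm 4, ← div_div]; ring
  rw [heq]
  nlinarith [key, sq_nonneg N]
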